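/- Suppose g : ℕ × ℤ → ℕ satisfies g(n,-1) = 1 for all n, g(1,k) = 1 and g(2,k) = 4 for all k ≥ 0, g(n,k) = g(n,n-1) for k ≥ n, and g(n+1,k) ≤ g(n,k) + 2·g(n,k-1) + 2 for all n ≥ 1, k ≥ 0. Then g(n,k) ≤ 2·binom(2n, k+1) for all n ≥ 1 and -1 ≤ k ≤ n-1. -/

import Mathlib

/-- Suppose `g : ℕ × ℤ → ℕ` satisfies `g(n,-1) = 1` for all `n`,
`g(1,k) = 1` and `g(2,k) = 4` for all `k ≥ 0`, `g(n,k) = g(n,n-1)` for `k ≥ n`, and the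
recurrence `g(n+1,k) ≤ g(n,k) + 2·g(n,k-1) + 2` for all `n ≥ 1`, `k ≥ 0`. Then
`g(n,k) ≤ 2·binom(2n, k+1)` for all `n ≥ 1` and `-1 ≤ k ≤ n-1`. -/
lemma pascal_aux (n s : ℕ) (hs : s ≤ 2 * n) :
    Nat.choose (2 * n) (s + 2) + 2 * Nat.choose (2 * n) (s + 1) + 1
      ≤ Nat.choose (2 * n + 2) (s + 2) := by
  have h1 : Nat.choose (2 * n + 2) (s + 2)
      = Nat.choose (2 * n + 1) (s + 1) + Nat.choose (2 * n + 1) (s + 2) :=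
    Nat.choose_succ_succ _ _
  have h2 : Nat.choose (2 * n + 1) (s + 1)
      = Nat.choose (2 * n) s + Nat.choose (2 * n) (s + 1) := Nat.choose_succ_succ _ _
  have h3 : Nat.choose (2 * n + 1) (s + 2)
      = Nat.choose (2 * n) (s + 1) + Nat.choose (2 * n) (s + 2) := Nat.choose_succ_succ _ _
  have h4 : 0 < Nat.choose (2 * n) s := Nat.choose_pos hs
  omega


theorem g_bound (g : ℕ → ℤ → ℕ)
    (h_neg : ∀ n : ℕ, g n (-1) = 1)
    (h_one : ∀ k : ℤ, 0 ≤ k → g 1 k = 1)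
    (h_two : ∀ k : ℤ, 0 ≤ k → g 2 k = 4)
    (h_large : ∀ (n : ℕ) (k : ℤ), (n : ℤ) ≤ k → g n k = g n ((n : ℤ) - 1))
    (h_rec : ∀ (n : ℕ), 1 ≤ n → ∀ k : ℤ, 0 ≤ k →
      g (n + 1) k ≤ g n k + 2 * g n (k - 1) + 2) :
    ∀ (n : ℕ), 1 ≤ n → ∀ k : ℤ, -1 ≤ k → k ≤ (n : ℤ) - 1 →
      g n k ≤ 2 * Nat.choose (2 * n) (k + 1).toNat := by
  intro n hn
  induction n, hn using Nat.le_induction with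
  | base =>
    intro k hk1 hk2
    norm_num at hk2
    interval_cases k
    · simp [h_neg]
    · simp [h_one 0 le_rfl]
  | succ n hn ih =>
    intro k hk1 hk2
    have hk2' : k ≤ (n : ℤ) := by push_cast at hk2; omega
    rcases eq_or_lt_of_le hk1 with h | hk0
    · -- k = -1
      rw [← h, h_neg]
      simp
    have hk0 : 0 ≤ k := by omega
    rcases Nat.lt_or_ge n 2 with hn2 | hn2
    · -- n = 1, so we prove the bound for g 2 directly
      have hn1 : n = 1 := by omega
      subst hn1
      rw [h_two k hk0]
      have ht : (k + 1).toNat ≤ 2 * 2 := by omega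
      have hj : (k + 1).toNat = 1 ∨ (k + 1).toNat = 2 := by omega
      rcases hj with hj | hj <;> rw [hj] <;> decide
    -- now n ≥ 2
    rcases eq_or_lt_of_le hk2' with hkn | hkn
    · -- k = n : central binomial case
      have hrec := h_rec n (by omega) k hk0
      have hlg : g n k = g n ((n : ℤ) - 1) := h_large n k (le_of_eq hkn.symm)
      have hih : g n (k - 1) ≤ 2 * Nat.choose (2 * n) ((k - 1) + 1).toNat := by
        apply ih (k - 1) (by omega) (by omega)
      have htn : ((k - 1) + 1).toNat = n := by omega
      rw [htn] at hih
      have hC : Nat.choose (2 * n) n = Nat.centralBinom n := rfl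
      set C := Nat.centralBinom n with hCdef
      have hg : g (n + 1) k ≤ 6 * C + 2 := by
        rw [hlg] at hrec
        have : g n ((n:ℤ) - 1) = g n (k - 1) := by rw [hkn]
        rw [this] at hrec
        omega
      have hcb : (n + 1) * Nat.centralBinom (n + 1) = 2 * (2 * n + 1) * C :=
        Nat.succ_mul_centralBinom_succ n
      have hCge : 2 * n ≤ C := by
        have := Nat.choose_le_middle 1 (2 * n)
        simpa [Nat.choose_one_right, Nat.centralBinom, hCdef] using this
      have hkt : (k + 1).toNat = n + 1 := by omega
      rw [hkt]
      have h2n : 2 * (n + 1) = 2 * n + 2 := by ring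
      have hcb2 : Nat.choose (2 * (n + 1)) (n + 1) = Nat.centralBinom (n + 1) := rfl
      rw [hcb2]
      -- suffices (n+1)(6C+2) ≤ (n+1)*2*centralBinom(n+1) = 4(2n+1)C
      have key : (n + 1) * (6 * C + 2) ≤ (n + 1) * (2 * Nat.centralBinom (n + 1)) := by
        have : (n + 1) * (2 * Nat.centralBinom (n + 1)) = 2 * (2 * (2 * n + 1) * C) := by
          rw [← hcb]; ring
        rw [this]
        nlinarith [hCge, hn2]
      have := Nat.le_of_mul_le_mul_left key (by omega : 0 < n + 1)
      omega
    · -- 0 ≤ k ≤ n - 1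
      have hrec := h_rec n (by omega) k hk0
      have hih1 : g n k ≤ 2 * Nat.choose (2 * n) (k + 1).toNat :=
        ih k (by omega) (by omega)
      rcases eq_or_lt_of_le hk0 with hk00 | hk01
      · -- k = 0
        rw [← hk00] at hrec hih1 ⊢
        norm_num [h_neg] at hrec
        simp only [zero_add, Int.toNat_one, Nat.choose_one_right] at hih1 ⊢
        omega
      · -- k ≥ 1
        have hih2 : g n (k - 1) ≤ 2 * Nat.choose (2 * n) ((k - 1) + 1).toNat :=
          ih (k - 1) (by omega) (by omega)
        set s : ℕ := (k - 1).toNat with hs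
        have hk1t : ((k - 1) + 1).toNat = s + 1 := by omega
        have hkt : (k + 1).toNat = s + 2 := by omega
        rw [hk1t] at hih2
        rw [hkt] at hih1 ⊢
        have hsle : s ≤ 2 * n := by omega
        have hp := pascal_aux n s hsle
        have h2n : 2 * (n + 1) = 2 * n + 2 := by ring
        rw [h2n]
        omega
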